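/- Let A be a type with a distinguished element 0 and a binary operation foo : A → A → A, and define h : ℕ → ℕ → A by h x y = 0 if x = 0 or y = 0, and h x y = foo (h (x−1) y) (h x (y−1)) otherwise. Consider the iterative computation that starts from the array state H₀ : ℕ → A with H₀ j = 0 for all j, and for i = 1, …, M produces H_i from H_{i−1} by setting, for j = 1, …, N in increasing order of j, H[j] := foo(H[j], H[j−1]) (the entry at index 0 is never written and remains 0). Then for every 0 ≤ i ≤ M and every 1 ≤ j ≤ N, H_i j = h i j; in particular the final array satisfies H_M j = h M j, so the loop nest REX computes the recurrence H. -/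

import Mathlib

/-- The two-dimensional recurrence `h x y = 0` if `x = 0` or `y = 0`, and
`h x y = foo (h (x-1) y) (h x (y-1))` otherwise. -/
def rexH {A : Type*} [Zero A] (foo : A → A → A) : ℕ → ℕ → A
  | 0, _ => 0
  | _ + 1, 0 => 0
  | x + 1, y + 1 => foo (rexH foo x (y + 1)) (rexH foo (x + 1) y)
  termination_by x y => (x, y)

/-- One row of the REX loop: starting from the array state `H`, perform the
updates `H[j] := foo (H[j], H[j-1])` for `j = 1, …, jmax` in increasing order
of `j` (index `0` is never written). -/
def rexRow {A : Type*} (foo : A → A → A) (H : ℕ → A) : ℕ → (ℕ → A)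
  | 0 => H
  | j + 1 =>
    Function.update (rexRow foo H j) (j + 1)
      (foo (rexRow foo H j (j + 1)) (rexRow foo H j j))

/-- The array state `H_i` after `i` iterations of the outer loop of REX with
inner loop bound `N`, starting from the all-zero array `H₀`. -/
def rexState {A : Type*} [Zero A] (foo : A → A → A) (N : ℕ) : ℕ → (ℕ → A)
  | 0 => fun _ => 0
  | i + 1 => rexRow foo (rexState foo N i) N

lemma rexRow_gt {A : Type*} (foo : A → A → A) (H : ℕ → A) :
    ∀ k j, k < j → rexRow foo H k j = H j := by
  intro k
  induction k with
  | zero => intro j _; rfl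
  | succ k ih =>
    intro j hj
    simp only [rexRow, Function.update]
    split
    · omega
    · exact ih j (by omega)


lemma rexRow_invariant {A : Type*} [Zero A] (foo : A → A → A) (i N : ℕ)
    (H : ℕ → A) (hH0 : H 0 = 0)
    (hH : ∀ j, 1 ≤ j → j ≤ N → H j = rexH foo i j) :
    ∀ k, k ≤ N → ∀ j, j ≤ k → rexRow foo H k j =
      (if j = 0 then 0 else rexH foo (i + 1) j) := by
  intro k
  induction k with
  | zero => intro _ j hj; interval_cases j; simpa [rexRow] using hH0
  | succ k ih =>
    intro hkN j hj
    simp only [rexRow, Function.update]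
    split
    · rename_i h
      subst h
      rw [rexRow_gt foo H k (k+1) (by omega), ih (by omega) k (le_refl k)]
      simp only [Nat.succ_ne_zero, if_false]
      rw [hH (k+1) (by omega) hkN]
      cases k with
      | zero => simp [rexH, hH0]
      | succ m => simp [rexH]
    · exact ih (by omega) j (by omega)

lemma rexState_key {A : Type*} [Zero A] (foo : A → A → A) (N : ℕ) :
    ∀ i, rexState foo N i 0 = 0 ∧
      ∀ j, 1 ≤ j → j ≤ N → rexState foo N i j = rexH foo i j := by
  intro i
  induction i with
  | zero =>
    refine ⟨rfl, fun j h1 _ => ?_⟩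
    cases j with
    | zero => omega
    | succ m => simp [rexState, rexH]
  | succ i ih =>
    obtain ⟨ih0, ihj⟩ := ih
    have key := rexRow_invariant foo i N (rexState foo N i) ih0 ihj N (le_refl N)
    constructor
    · cases N with
      | zero => exact ih0
      | succ n => simpa [rexState] using key 0 (by omega)
    · intro j h1 h2
      have := key j h2
      rw [if_neg (by omega)] at this
      exact this

/-- The loop nest REX computes the recurrence `h`: for every `0 ≤ i ≤ M` and
every `1 ≤ j ≤ N`, the array state after `i` outer iterations satisfies
`H_i j = h i j`; in particular the final array satisfies `H_M j = h M j`. -/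
theorem rex_computes_recurrence {A : Type*} [Zero A] (foo : A → A → A)
    (M N : ℕ) :
    (∀ i : ℕ, i ≤ M → ∀ j : ℕ, 1 ≤ j → j ≤ N →
      rexState foo N i j = rexH foo i j) ∧
    (∀ j : ℕ, 1 ≤ j → j ≤ N → rexState foo N M j = rexH foo M j) := by
  exact ⟨fun i _ j h1 h2 => (rexState_key foo N i).2 j h1 h2,
    fun j h1 h2 => (rexState_key foo N M).2 j h1 h2⟩
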